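/- Every prime p with p ≡ 3 (mod 8) can be written as p = x² + y² + z² with integers x ≠ 0, y ≠ 0, and z ≠ 0, and p cannot be written as a sum of two squares. -/

import Mathlib

set_option maxHeartbeats 800000

/-- Descent step for the quadratic form `x² + 2y²`. -/
private theorem descent_two (p : ℕ) (hp : p.Prime) :
    ∀ m : ℕ, 0 < m → (m : ℤ) < p → (∃ a b : ℤ, a ^ 2 + 2 * b ^ 2 = m * p) →
      ∃ a b : ℤ, a ^ 2 + 2 * b ^ 2 = p := by
  intro m
  induction m using Nat.strong_induction_on with
  | _ m ih =>
    rintro hm hmp ⟨a, b, hab⟩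
    rcases eq_or_lt_of_le (show 1 ≤ m from hm) with h1 | h2
    · refine ⟨a, b, ?_⟩
      rw [hab, ← h1]
      push_cast; ring
    · -- m ≥ 2
      haveI : NeZero m := ⟨hm.ne'⟩
      set a' : ℤ := (a : ZMod m).valMinAbs with ha'def
      set b' : ℤ := (b : ZMod m).valMinAbs with hb'def
      have hca : ((a' : ZMod m)) = (a : ZMod m) := ZMod.coe_valMinAbs _
      have hcb : ((b' : ZMod m)) = (b : ZMod m) := ZMod.coe_valMinAbs _
      have hzero : ((a : ZMod m)) ^ 2 + 2 * (b : ZMod m) ^ 2 = 0 := by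
        have := congrArg (fun z : ℤ => (z : ZMod m)) hab
        push_cast at this
        simpa using this
      have hNdvd : (m : ℤ) ∣ a' ^ 2 + 2 * b' ^ 2 := by
        have : ((a' ^ 2 + 2 * b' ^ 2 : ℤ) : ZMod m) = 0 := by
          push_cast
          rw [hca, hcb]; exact hzero
        exact (ZMod.intCast_zmod_eq_zero_iff_dvd _ m).mp this
      have hU : (m : ℤ) ∣ a * a' + 2 * (b * b') := by
        have : ((a * a' + 2 * (b * b') : ℤ) : ZMod m) = 0 := by
          push_cast
          rw [hca, hcb]
          linear_combination hzero
        exact (ZMod.intCast_zmod_eq_zero_iff_dvd _ m).mp this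
      have hV : (m : ℤ) ∣ a * b' - a' * b := by
        have : ((a * b' - a' * b : ℤ) : ZMod m) = 0 := by
          push_cast
          rw [hca, hcb]; ring
        exact (ZMod.intCast_zmod_eq_zero_iff_dvd _ m).mp this
      -- bounds
      have hba : 2 * a'.natAbs ≤ m := by
        have := ZMod.natAbs_valMinAbs_le (a : ZMod m)
        omega
      have hbb : 2 * b'.natAbs ≤ m := by
        have := ZMod.natAbs_valMinAbs_le (b : ZMod m)
        omega
      have hba' : 2 * |a'| ≤ (m : ℤ) := by
        rw [Int.abs_eq_natAbs]; exact_mod_cast hba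
      have hbb' : 2 * |b'| ≤ (m : ℤ) := by
        rw [Int.abs_eq_natAbs]; exact_mod_cast hbb
      have hsqa : 4 * a' ^ 2 ≤ (m : ℤ) ^ 2 := by
        nlinarith [sq_abs a', abs_nonneg a']
      have hsqb : 4 * b' ^ 2 ≤ (m : ℤ) ^ 2 := by
        nlinarith [sq_abs b', abs_nonneg b']
      obtain ⟨r, hr⟩ := hNdvd
      have hmpos : (0 : ℤ) < m := by exact_mod_cast hm
      have hrnonneg : 0 ≤ r := by nlinarith [sq_nonneg a', sq_nonneg b']
      have hrlt : r < m := by nlinarith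
      have hrpos : 0 < r := by
        rcases lt_or_eq_of_le hrnonneg with hlt | heq
        · exact hlt
        · -- r = 0 : contradiction
          exfalso
          have hN0 : a' ^ 2 + 2 * b' ^ 2 = 0 := by rw [hr, ← heq]; ring
          have ha0 : a' = 0 := by
            have h1 := sq_nonneg a'
            have h2 := sq_nonneg b'
            have : a' ^ 2 = 0 := by linarith
            exact pow_eq_zero_iff (two_ne_zero) |>.mp this
          have hb0 : b' = 0 := by
            have h1 := sq_nonneg a'
            have h2 := sq_nonneg b'
            have : b' ^ 2 = 0 := by linarith
            exact pow_eq_zero_iff (two_ne_zero) |>.mp this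
          have hda : (m : ℤ) ∣ a := by
            have : ((a : ℤ) : ZMod m) = 0 := by rw [← hca, ha0]; simp
            exact (ZMod.intCast_zmod_eq_zero_iff_dvd _ m).mp this
          have hdb : (m : ℤ) ∣ b := by
            have : ((b : ℤ) : ZMod m) = 0 := by rw [← hcb, hb0]; simp
            exact (ZMod.intCast_zmod_eq_zero_iff_dvd _ m).mp this
          obtain ⟨s, hs⟩ := hda
          obtain ⟨t, ht⟩ := hdb
          have hpe : (p : ℤ) = (m : ℤ) * (s ^ 2 + 2 * t ^ 2) := by
            apply mul_left_cancel₀ hmpos.ne'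
            rw [← hab, hs, ht]; ring
          have hdvdp : m ∣ p := by
            have : (m : ℤ) ∣ (p : ℤ) := ⟨s ^ 2 + 2 * t ^ 2, hpe⟩
            exact_mod_cast this
          rcases (Nat.Prime.eq_one_or_self_of_dvd hp m hdvdp) with h' | h'
          · omega
          · rw [h'] at hmp; exact absurd hmp (lt_irrefl _)
      obtain ⟨u, hu⟩ := hU
      obtain ⟨v, hv⟩ := hV
      have key : (r : ℤ) * p = u ^ 2 + 2 * v ^ 2 := by
        have hm2 : ((m : ℤ)) ^ 2 ≠ 0 := pow_ne_zero _ hmpos.ne'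
        apply mul_left_cancel₀ hm2
        calc (m : ℤ) ^ 2 * (r * p) = ((m : ℤ) * p) * ((m : ℤ) * r) := by ring
          _ = (a ^ 2 + 2 * b ^ 2) * (a' ^ 2 + 2 * b' ^ 2) := by rw [hab, hr]
          _ = ((m : ℤ) * u) ^ 2 + 2 * ((m : ℤ) * v) ^ 2 := by rw [← hu, ← hv]; ring
          _ = (m : ℤ) ^ 2 * (u ^ 2 + 2 * v ^ 2) := by ring
      have htr : (r.toNat : ℤ) = r := Int.toNat_of_nonneg hrnonneg
      have hrm : r.toNat < m := by omega
      refine ih r.toNat hrm ?_ ?_ ⟨u, v, ?_⟩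
      · omega
      · rw [htr]; exact lt_trans hrlt hmp
      · rw [← key, htr]

/-- Every prime `p ≡ 3 (mod 8)` is a sum of three nonzero squares, and is not a
sum of two squares. -/
theorem prime_three_mod_eight_sum_three_squares (p : ℕ) (hp : p.Prime) (h : p % 8 = 3) :
    (∃ x y z : ℤ, x ≠ 0 ∧ y ≠ 0 ∧ z ≠ 0 ∧ (p : ℤ) = x ^ 2 + y ^ 2 + z ^ 2) ∧
      ¬ ∃ x y : ℤ, (p : ℤ) = x ^ 2 + y ^ 2 := by
  haveI : Fact p.Prime := ⟨hp⟩
  have hp2 : p ≠ 2 := by omega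
  have hp3 : 3 ≤ p := by omega
  have h8 : ((p : ℕ) : ZMod 8) = 3 := by
    rw [← ZMod.natCast_mod p 8, h]
    norm_num
  constructor
  · -- existence
    have hsq : IsSquare (-2 : ZMod p) :=
      (ZMod.exists_sq_eq_neg_two_iff hp2).mpr (Or.inr h)
    obtain ⟨c, hc⟩ := hsq
    haveI : NeZero p := ⟨hp.pos.ne'⟩
    set a : ℤ := c.valMinAbs with hadef
    have hca : ((a : ZMod p)) = c := ZMod.coe_valMinAbs _
    have hdvd : (p : ℤ) ∣ a ^ 2 + 2 := by
      have : ((a ^ 2 + 2 : ℤ) : ZMod p) = 0 := by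
        push_cast
        rw [hca, sq, ← hc]
        ring
      exact (ZMod.intCast_zmod_eq_zero_iff_dvd _ p).mp this
    obtain ⟨m, hm⟩ := hdvd
    have hppos : (0 : ℤ) < p := by exact_mod_cast hp.pos
    have hba : 2 * a.natAbs ≤ p := by
      have := ZMod.natAbs_valMinAbs_le c
      omega
    have hba' : 2 * |a| ≤ (p : ℤ) := by
      rw [Int.abs_eq_natAbs]; exact_mod_cast hba
    have hmpos : 0 < m := by nlinarith [sq_nonneg a]
    have hmlt : m < p := by
      nlinarith [sq_abs a, abs_nonneg a]
    obtain ⟨x, y, hxy⟩ := descent_two p hp m.toNat (by omega)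
      (by rw [Int.toNat_of_nonneg hmpos.le]; exact hmlt)
      ⟨a, 1, by rw [Int.toNat_of_nonneg hmpos.le]; linarith [hm]⟩
    -- p = x² + 2y² = x² + y² + y²
    have hcast : ((x : ZMod 8)) ^ 2 + 2 * (y : ZMod 8) ^ 2 = 3 := by
      have := congrArg (fun z : ℤ => (z : ZMod 8)) hxy
      push_cast at this
      rw [this, h8]
    have hx : x ≠ 0 := by
      rintro rfl
      simp only [ne_eq, Int.cast_zero] at hcast
      rw [show ((0 : ZMod 8)) ^ 2 + 2 * (y : ZMod 8) ^ 2 = 2 * (y : ZMod 8) ^ 2 by ring] at hcast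
      exact (by decide : ∀ d : ZMod 8, ¬ 2 * d ^ 2 = 3) _ hcast
    have hy : y ≠ 0 := by
      rintro rfl
      simp only [ne_eq, Int.cast_zero] at hcast
      rw [show ((x : ZMod 8)) ^ 2 + 2 * (0 : ZMod 8) ^ 2 = (x : ZMod 8) ^ 2 by ring] at hcast
      exact (by decide : ∀ d : ZMod 8, ¬ d ^ 2 = 3) _ hcast
    exact ⟨x, y, y, hx, hy, hy, by rw [← hxy]; ring⟩
  · rintro ⟨x, y, hxy⟩
    have hcast : ((x : ZMod 8)) ^ 2 + (y : ZMod 8) ^ 2 = 3 := by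
      have := congrArg (fun z : ℤ => (z : ZMod 8)) hxy
      push_cast at this
      rw [← this, h8]
    exact (by decide : ∀ c d : ZMod 8, ¬ c ^ 2 + d ^ 2 = 3) _ _ hcast
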